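/- Let X be a real normed space and J : X → X* a duality selection mapping (i.e., ⟨x, Jx⟩ = ‖x‖² = ‖Jx‖² for all x ∈ X) which is norm-to-norm continuous. Then X is smooth: for all x, y ∈ X with ‖x‖ = ‖y‖ = 1, the limit lim_{λ→0} (‖x + λy‖ − ‖x‖)/λ exists and equals ⟨y, Jx⟩. -/

import Mathlib

/-- A normed space with a norm-to-norm continuous duality selection mapping is
smooth: the one-sided limits of the difference quotient of the norm exist and
equal `⟨y, Jx⟩` on the unit sphere. -/
theorem smooth_of_continuous_duality_selection
    {X : Type*} [NormedAddCommGroup X] [NormedSpace ℝ X]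
    (J : X → X →L[ℝ] ℝ)
    (hJ : ∀ x : X, J x x = ‖x‖ ^ 2 ∧ ‖J x‖ ^ 2 = ‖x‖ ^ 2)
    (hJcont : Continuous J) :
    ∀ x y : X, ‖x‖ = 1 → ‖y‖ = 1 →
      Filter.Tendsto (fun l : ℝ => (‖x + l • y‖ - ‖x‖) / l)
        (nhdsWithin 0 {0}ᶜ) (nhds (J x y)) := by
  intro x y hx hy
  set L := (J x) y with hL
  have hJx_norm : ‖J x‖ = 1 := by
    have h2 := (hJ x).2
    rw [hx] at h2
    nlinarith [norm_nonneg (J x)]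
  -- key pointwise bound
  have key : ∀ l : ℝ, l ≠ 0 → |l| < 1 →
      |(‖x + l • y‖ - ‖x‖) / l - L| ≤ |(J (x + l • y)) y / ‖x + l • y‖ - L| := by
    intro l hl hl1
    set z := x + l • y with hz
    have hzx : ‖x‖ ≤ ‖z‖ + ‖l • y‖ := by
      calc ‖x‖ = ‖z - l • y‖ := by rw [hz]; simp
        _ ≤ ‖z‖ + ‖l • y‖ := by
          simpa using norm_sub_le z (l • y)
    have hly : ‖l • y‖ = |l| := by rw [norm_smul, hy]; simp
    have hznorm : (0:ℝ) < ‖z‖ := by rw [hly] at hzx; linarith [hx ▸ hzx]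
    have hJz_norm : ‖J z‖ = ‖z‖ := by
      have h2 := (hJ z).2
      nlinarith [norm_nonneg (J z)]
    set c := (J z) y with hc
    -- bound 1 : 1 + l * L ≤ ‖z‖
    have hb1 : 1 + l * L ≤ ‖z‖ := by
      have h1 : (J x) z ≤ ‖J x‖ * ‖z‖ := by
        calc (J x) z ≤ |(J x) z| := le_abs_self _
          _ ≤ ‖J x‖ * ‖z‖ := (J x).le_opNorm z
      have h2 : (J x) z = 1 + l * L := by
        rw [hz, map_add, map_smul, (hJ x).1, hx]
        simp [hL]
      rw [h2, hJx_norm, one_mul] at h1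
      exact h1
    -- bound 2 : ‖z‖^2 - l * c ≤ ‖z‖
    have hb2 : ‖z‖ ^ 2 - l * c ≤ ‖z‖ := by
      have h1 : (J z) x ≤ ‖J z‖ * ‖x‖ := by
        calc (J z) x ≤ |(J z) x| := le_abs_self _
          _ ≤ ‖J z‖ * ‖x‖ := (J z).le_opNorm x
      have h2 : (J z) x = ‖z‖ ^ 2 - l * c := by
        have : (J z) z = (J z) x + l * c := by
          rw [hz, map_add, map_smul]; simp [hc]; exact Or.inl rfl
        rw [(hJ z).1] at this; linarith
      rw [h2, hJz_norm, hx, mul_one] at h1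
      exact h1
    have h2' : ‖z‖ - 1 ≤ l * (c / ‖z‖) := by
      rw [mul_div_assoc', le_div_iff₀ hznorm]
      nlinarith
    have h1' : l * L ≤ ‖z‖ - 1 := by linarith
    have e1 : (‖z‖ - ‖x‖) / l - L = ((‖z‖ - 1) - l * L) / l := by
      rw [hx]; field_simp
    have e2 : c / ‖z‖ - L = (l * (c / ‖z‖) - l * L) / l := by
      field_simp
    rw [e1, e2, abs_div, abs_div]
    have hnum : |‖z‖ - 1 - l * L| ≤ |l * (c / ‖z‖) - l * L| := by
      rw [abs_of_nonneg (by linarith), abs_of_nonneg (by linarith)]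
      linarith
    exact (div_le_div_iff_of_pos_right (abs_pos.mpr hl)).mpr hnum
  -- the majorant tends to 0
  have hg : Filter.Tendsto (fun l : ℝ => |(J (x + l • y)) y / ‖x + l • y‖ - L|)
      (nhdsWithin 0 {0}ᶜ) (nhds 0) := by
    have hcont : ContinuousAt (fun l : ℝ => |(J (x + l • y)) y / ‖x + l • y‖ - L|) 0 := by
      have h0 : ContinuousAt (fun l : ℝ => x + l • y) 0 := by fun_prop
      have h1 : ContinuousAt (fun l : ℝ => (J (x + l • y)) y) 0 := by
        have : Continuous (fun f : X →L[ℝ] ℝ => f y) :=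
          (ContinuousLinearMap.apply ℝ ℝ y).continuous
        exact (this.continuousAt).comp ((hJcont.continuousAt).comp h0)
      have h2 : ContinuousAt (fun l : ℝ => ‖x + l • y‖) 0 := (continuous_norm.continuousAt).comp h0
      have h3 : ‖x + (0:ℝ) • y‖ ≠ 0 := by simp [hx]
      exact ((h1.div h2 h3).sub continuousAt_const).abs
    have hval : |(J (x + (0:ℝ) • y)) y / ‖x + (0:ℝ) • y‖ - L| = 0 := by
      simp [hx, hL]
    have := hcont.tendsto
    rw [hval] at this
    exact this.mono_left nhdsWithin_le_nhds
  -- squeeze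
  have hsub : Filter.Tendsto (fun l : ℝ => (‖x + l • y‖ - ‖x‖) / l - L)
      (nhdsWithin 0 {0}ᶜ) (nhds 0) := by
    apply squeeze_zero_norm' _ hg
    have hmem : {l : ℝ | l ≠ 0 ∧ |l| < 1} ∈ nhdsWithin (0:ℝ) {0}ᶜ := by
      have h1 : {l : ℝ | |l| < 1} ∈ nhds (0:ℝ) := by
        have := Metric.ball_mem_nhds (0:ℝ) one_pos
        simpa [Metric.ball, Real.dist_eq] using this
      have h2 : {l : ℝ | l ≠ 0} ∈ nhdsWithin (0:ℝ) {0}ᶜ :=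
        self_mem_nhdsWithin
      filter_upwards [h2, nhdsWithin_le_nhds h1] with l ha hb
      exact ⟨ha, hb⟩
    filter_upwards [hmem] with l ⟨hl, hl1⟩
    simpa using key l hl hl1
  have := hsub.add_const L
  simpa using this
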